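/- arXiv:1304.3613 — 3 statements merged into one kernel-verified Lean document; each statement's English description precedes it below -/
import Mathlib

section
/- Let Π be an instance of NotAllEqual 3-SAT with n clauses and G(Π)=(V,E), b, r the associated construction. In every (b,r)-partition of E, with any b-orientation of the blue tree and r-orientation of the red tree, for every variable x the edges of the cycle Δ_x are oriented so that Δ_x becomes a directed cycle, and the colors of the edges alternate between blue and red along Δ_x. -/
/-!
Common definitions for formalizing the NP-completeness reduction from
NotAllEqual 3-SAT to (b,r)-partitions of graphs.

An instance of NotAllEqual 3-SAT with variables in `α` and `n` clauses is
given by `cl : Fin n → Fin 3 → α`, clause `i` consisting of the three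
(distinct) variables `cl i 0, cl i 1, cl i 2`.

The vertex set of the associated graph `G(Π)`: the special vertex `s`,
the `u`-vertices `u i o j` and the `v`-vertices `v i o j`, where `i : Fin n`
is a clause index, `o : Bool` tells whether we are in the gadget of the
original clause (`false`) or of its copy (`true`), and `j : Fin 3` is the
position of a variable inside the clause.
-/

inductive GVert (n : ℕ) : Type
  | s : GVert n
  | u : Fin n → Bool → Fin 3 → GVert n
  | v : Fin n → Bool → Fin 3 → GVert n
  deriving DecidableEq

/-- The occurrences of the variable `x`: the pairs (clause index, position)
where `x` appears. -/
def occs {α : Type*} [DecidableEq α] {n : ℕ} (cl : Fin n → Fin 3 → α) (x : α) :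
    Finset (Fin n × Fin 3) :=
  Finset.univ.filter (fun p => cl p.1 p.2 = x)

/-- The cyclic successor of an occurrence `p` among the occurrences of the
variable sitting at `p`; this is used to build the cycle `Δ_x`. -/
noncomputable def nextOcc {α : Type*} [DecidableEq α] {n : ℕ}
    (cl : Fin n → Fin 3 → α) (p : Fin n × Fin 3) : Fin n × Fin 3 :=
  (occs cl (cl p.1 p.2)).toList.next p (by simp [occs, Finset.mem_toList])

/-- The edges of `G(Π)`: the star at `s`, the triangles on `U^C`, the
matchings `E^C`, and the cycles `Δ_x` (which alternate `v`-vertices of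
original-clause gadgets and of copy gadgets; the cycle for the variable `x`
is `v p₁ false, v p₁ true, v p₂ false, v p₂ true, …` over the occurrences
`p₁, p₂, …` of `x` in cyclic order). -/
inductive EdgeSpec {α : Type*} [DecidableEq α] {n : ℕ} (cl : Fin n → Fin 3 → α) :
    GVert n → GVert n → Prop
  | star (i : Fin n) (o : Bool) (j : Fin 3) : EdgeSpec cl .s (.u i o j)
  | tri (i : Fin n) (o : Bool) {j j' : Fin 3} (h : j ≠ j') :
      EdgeSpec cl (.u i o j) (.u i o j')
  | mat (i : Fin n) (o : Bool) (j : Fin 3) : EdgeSpec cl (.u i o j) (.v i o j)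
  | cycA (p : Fin n × Fin 3) : EdgeSpec cl (.v p.1 false p.2) (.v p.1 true p.2)
  | cycB (p : Fin n × Fin 3) :
      EdgeSpec cl (.v p.1 true p.2) (.v (nextOcc cl p).1 false (nextOcc cl p).2)

/-- The graph `G(Π)` associated to the NotAllEqual 3-SAT instance. -/
noncomputable def gadgetGraph {α : Type*} [DecidableEq α] {n : ℕ}
    (cl : Fin n → Fin 3 → α) : SimpleGraph (GVert n) :=
  SimpleGraph.fromRel (EdgeSpec cl)

/-- The blue outdegree prescription `b`. -/
def bvec (n : ℕ) : GVert n → ℕ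
  | .s => 3 * n
  | .u _ _ _ => 1
  | .v _ o _ => if o then 0 else 1

/-- The red outdegree prescription `r`. -/
def rvec (n : ℕ) : GVert n → ℕ
  | .s => 3 * n
  | .u _ _ _ => 1
  | .v _ o _ => if o then 1 else 0

/-- `dir` is an orientation of the edge set `F`: every directed pair lies in
`F`, and every edge of `F` gets exactly one direction. -/
def IsOrientation {V : Type*} (F : Set (Sym2 V)) (dir : V → V → Prop) : Prop :=
  (∀ a b, dir a b → s(a, b) ∈ F) ∧
    ∀ a b, s(a, b) ∈ F → (dir a b ∨ dir b a) ∧ ¬(dir a b ∧ dir b a)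

/-- `dir` is an `m`-orientation of `F`: an orientation in which exactly `m v`
arcs leave each vertex `v`. -/
def IsMOrientation {V : Type*} (F : Set (Sym2 V)) (m : V → ℕ)
    (dir : V → V → Prop) : Prop :=
  IsOrientation F dir ∧ ∀ v, Nat.card {w // dir v w} = m v

/-- `B` and `R` partition the edges of `G` into two spanning trees. -/
def IsTreePartition {V : Type*} (G B R : SimpleGraph V) : Prop :=
  B ≤ G ∧ R ≤ G ∧ B.IsTree ∧ R.IsTree ∧
    Disjoint B.edgeSet R.edgeSet ∧ B.edgeSet ∪ R.edgeSet = G.edgeSet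

/-- `(B, R)` is a `(b,r)`-partition of (the edge set of) `G`: a partition
into a blue spanning tree having a `b`-orientation and a red spanning tree
having an `r`-orientation. -/
def IsBRPartition {V : Type*} (G : SimpleGraph V) (b r : V → ℕ)
    (B R : SimpleGraph V) : Prop :=
  IsTreePartition G B R ∧
    (∃ d, IsMOrientation B.edgeSet b d) ∧ ∃ d, IsMOrientation R.edgeSet r d

/-- `G` admits some `(b,r)`-partition. -/
def HasBRPartition {V : Type*} (G : SimpleGraph V) (b r : V → ℕ) : Prop :=
  ∃ B R, IsBRPartition G b r B R

/-- The blue/red coloring `c` (`true` = blue, `false` = red) satisfies the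
NotAllEqual 3-SAT instance: every clause contains a blue and a red variable. -/
def NAESatisfies {α : Type*} {n : ℕ} (cl : Fin n → Fin 3 → α) (c : α → Bool) :
    Prop :=
  ∀ i : Fin n, (∃ j, c (cl i j) = true) ∧ ∃ j, c (cl i j) = false

/-- The matching edge `u^C_x v^C_x` at occurrence `p`, in the original gadget
(`o = false`) or the copy gadget (`o = true`). -/
def mEdge {n : ℕ} (p : Fin n × Fin 3) (o : Bool) : Sym2 (GVert n) :=
  s(GVert.u p.1 o p.2, GVert.v p.1 o p.2)

/-- The edge `s(a, b)` of the partitioned graph is oriented from `a` to `b`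
(in the orientation of whichever tree contains it). -/
def OrientedTo {V : Type*} (B R : SimpleGraph V) (db dr : V → V → Prop)
    (a b : V) : Prop :=
  (s(a, b) ∈ B.edgeSet ∧ db a b) ∨ (s(a, b) ∈ R.edgeSet ∧ dr a b)

section Aux

variable {α : Type*} [DecidableEq α] {n : ℕ}

private def gvEnc : GVert n → Option ((Fin n × Bool × Fin 3) ⊕ (Fin n × Bool × Fin 3))
  | .s => none
  | .u i o j => some (.inl (i, o, j))
  | .v i o j => some (.inr (i, o, j))

private lemma gvEnc_inj : Function.Injective (gvEnc (n := n)) := by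
  intro a b h
  cases a <;> cases b <;> simp_all [gvEnc]

instance : Finite (GVert n) := Finite.of_injective _ gvEnc_inj

lemma gadget_adj (cl : Fin n → Fin 3 → α) (a b : GVert n) :
    (gadgetGraph cl).Adj a b ↔ a ≠ b ∧ (EdgeSpec cl a b ∨ EdgeSpec cl b a) :=
  SimpleGraph.fromRel_adj _ a b

lemma mem_occs_iff (cl : Fin n → Fin 3 → α) (x : α) (p : Fin n × Fin 3) :
    p ∈ occs cl x ↔ cl p.1 p.2 = x := by simp [occs]

lemma nextOcc_eq_next (cl : Fin n → Fin 3 → α) {x : α} {p : Fin n × Fin 3}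
    (hp : p ∈ occs cl x) :
    nextOcc cl p = (occs cl x).toList.next p (by
      rw [Finset.mem_toList]; exact hp) := by
  have hx : cl p.1 p.2 = x := (mem_occs_iff cl x p).1 hp
  unfold nextOcc
  congr 1 <;> rw [hx]

lemma nextOcc_mem (cl : Fin n → Fin 3 → α) {x : α} {p : Fin n × Fin 3}
    (hp : p ∈ occs cl x) : nextOcc cl p ∈ occs cl x := by
  rw [nextOcc_eq_next cl hp, ← Finset.mem_toList]
  exact List.next_mem _ _ _

lemma nextOcc_injOn (cl : Fin n → Fin 3 → α) {x : α} {p q : Fin n × Fin 3}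
    (hp : p ∈ occs cl x) (hq : q ∈ occs cl x)
    (h : nextOcc cl p = nextOcc cl q) : p = q := by
  rw [nextOcc_eq_next cl hp, nextOcc_eq_next cl hq] at h
  have hnd := (occs cl x).nodup_toList
  have h1 := List.prev_next (occs cl x).toList hnd p (Finset.mem_toList.2 hp)
  have h2 := List.prev_next (occs cl x).toList hnd q (Finset.mem_toList.2 hq)
  rw [← h1, ← h2]
  congr 1

lemma list_next_iterate {β : Type*} [DecidableEq β] (l : List β) (hnd : l.Nodup) (f : β → β)
    (hf : ∀ a (h : a ∈ l), f a = l.next a h) :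
    ∀ (k : ℕ) (i : Fin l.length),
      f^[k] (l.get i) = l.get ⟨(i + k) % l.length, Nat.mod_lt _ (i.1.zero_le.trans_lt i.2)⟩ := by
  intro k
  induction k with
  | zero => intro i; simp [Nat.mod_eq_of_lt i.2]
  | succ k ih =>
    intro i
    have hi' : (↑i + k) % l.length < l.length := Nat.mod_lt _ (i.1.zero_le.trans_lt i.2)
    have hmem : l.get ⟨(↑i + k) % l.length, hi'⟩ ∈ l := l.get_mem _
    rw [Function.iterate_succ_apply', ih i, hf _ hmem,
      (show l.next (l.get ⟨(↑i + k) % l.length, hi'⟩) hmem =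
          l.get ⟨((↑i + k) % l.length + 1) % l.length,
            Nat.mod_lt _ (((↑i + k) % l.length).zero_le.trans_lt hi')⟩ from
        List.next_getElem l hnd ((↑i + k) % l.length) hi')]
    congr 1
    simp only [Fin.mk.injEq, Nat.mod_add_mod]
    congr 1

lemma nextOcc_orbit (cl : Fin n → Fin 3 → α) {x : α} {p q : Fin n × Fin 3}
    (hp : p ∈ occs cl x) (hq : q ∈ occs cl x) :
    ∃ k, (nextOcc cl)^[k] p = q := by
  classical
  have hnd : (occs cl x).toList.Nodup := (occs cl x).nodup_toList
  have hf : ∀ a (h : a ∈ (occs cl x).toList),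
      nextOcc cl a = (occs cl x).toList.next a h := by
    intro a h
    exact nextOcc_eq_next cl (Finset.mem_toList.1 h)
  have key := list_next_iterate _ hnd _ hf
  obtain ⟨i, rfl⟩ := List.get_of_mem (Finset.mem_toList.2 hp)
  obtain ⟨j, rfl⟩ := List.get_of_mem (Finset.mem_toList.2 hq)
  refine ⟨(occs cl x).toList.length + j - i, ?_⟩
  rw [key]
  congr 1
  refine Fin.ext ?_
  show (↑i + ((occs cl x).toList.length + ↑j - ↑i)) % (occs cl x).toList.length = ↑j
  have h1 : i.1 < (occs cl x).toList.length := i.2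
  have h2 : j.1 < (occs cl x).toList.length := j.2
  have h3 : (↑i + ((occs cl x).toList.length + ↑j - ↑i))
      = (occs cl x).toList.length + ↑j := by omega
  rw [h3, Nat.add_mod_left, Nat.mod_eq_of_lt h2]

end Aux
section Aux2

variable {α : Type*} [DecidableEq α] {n : ℕ} {cl : Fin n → Fin 3 → α}
  {B R : SimpleGraph (GVert n)} {db dr : GVert n → GVert n → Prop}

lemma card_subtype_one {P : GVert n → Prop} (h : Nat.card {w // P w} = 1) :
    ∃ w, P w ∧ ∀ w', P w' → w' = w := by
  rw [Nat.card_eq_one_iff_exists] at h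
  obtain ⟨⟨w, hw⟩, huniq⟩ := h
  exact ⟨w, hw, fun w' hw' => congrArg Subtype.val (huniq ⟨w', hw'⟩)⟩

lemma card_subtype_zero {P : GVert n → Prop} (h : Nat.card {w // P w} = 0)
    (w : GVert n) : ¬ P w := by
  intro hw
  rw [Nat.card_eq_zero] at h
  rcases h with h | h
  · exact h.elim ⟨w, hw⟩
  · exact h.not_finite inferInstance

/-- any arc lies on a graph edge -/
lemma arc_adj (hpart : IsTreePartition (gadgetGraph cl) B R)
    (hb : IsMOrientation B.edgeSet (bvec n) db)
    (hr : IsMOrientation R.edgeSet (rvec n) dr)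
    {a b : GVert n} (h : db a b ∨ dr a b) : (gadgetGraph cl).Adj a b := by
  rcases h with h | h
  · exact hpart.1 ((SimpleGraph.mem_edgeSet B).1 (hb.1.1 a b h))
  · exact hpart.2.1 ((SimpleGraph.mem_edgeSet R).1 (hr.1.1 a b h))

/-- no edge carries arcs both ways -/
lemma no_rev (hpart : IsTreePartition (gadgetGraph cl) B R)
    (hb : IsMOrientation B.edgeSet (bvec n) db)
    (hr : IsMOrientation R.edgeSet (rvec n) dr)
    {a b : GVert n} (h : db a b ∨ dr a b) : ¬ (db b a ∨ dr b a) := by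
  have hdisj := hpart.2.2.2.2.1
  rintro (h' | h') <;> rcases h with h | h
  · exact ((hb.1.2 a b (hb.1.1 a b h)).2 ⟨h, h'⟩)
  · exact Set.disjoint_left.1 hdisj (by rw [Sym2.eq_swap]; exact hb.1.1 b a h')
      (hr.1.1 a b h)
  · exact Set.disjoint_left.1 hdisj (hb.1.1 a b h)
      (by rw [Sym2.eq_swap]; exact hr.1.1 b a h')
  · exact ((hr.1.2 a b (hr.1.1 a b h)).2 ⟨h, h'⟩)

/-- every graph edge carries an arc -/
lemma arc_total (hpart : IsTreePartition (gadgetGraph cl) B R)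
    (hb : IsMOrientation B.edgeSet (bvec n) db)
    (hr : IsMOrientation R.edgeSet (rvec n) dr)
    {a b : GVert n} (hadj : (gadgetGraph cl).Adj a b) :
    (db a b ∨ dr a b) ∨ (db b a ∨ dr b a) := by
  have he : s(a, b) ∈ (gadgetGraph cl).edgeSet := hadj
  rw [← hpart.2.2.2.2.2] at he
  rcases he with he | he
  · rcases (hb.1.2 a b he).1 with h | h
    · exact Or.inl (Or.inl h)
    · exact Or.inr (Or.inl h)
  · rcases (hr.1.2 a b he).1 with h | h
    · exact Or.inl (Or.inr h)
    · exact Or.inr (Or.inr h)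

/-- Step A: no arc enters `s`. -/
lemma no_into_s (hpart : IsTreePartition (gadgetGraph cl) B R)
    (hb : IsMOrientation B.edgeSet (bvec n) db)
    (hr : IsMOrientation R.edgeSet (rvec n) dr)
    (w : GVert n) : ¬ (db w .s ∨ dr w .s) := by
  intro hw
  classical
  have hinj : Function.Injective (fun t : Fin n × Bool × Fin 3 =>
      GVert.u t.1 t.2.1 t.2.2) := by
    intro a b hab
    simp only [GVert.u.injEq] at hab
    exact Prod.ext hab.1 (Prod.ext hab.2.1 hab.2.2)
  have hNScard : (Set.range (fun t : Fin n × Bool × Fin 3 =>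
      GVert.u t.1 t.2.1 t.2.2)).ncard = 6 * n := by
    rw [← Nat.card_coe_set_eq, ← Nat.card_congr (Equiv.ofInjective _ hinj)]
    simp only [Nat.card_eq_fintype_card, Fintype.card_prod, Fintype.card_fin,
      Fintype.card_bool]
    ring
  set Sb : Set (GVert n) := {a | db .s a} with hSb
  set Sr : Set (GVert n) := {a | dr .s a} with hSr
  have hadjNS : ∀ a, (gadgetGraph cl).Adj .s a →
      a ∈ Set.range (fun t : Fin n × Bool × Fin 3 => GVert.u t.1 t.2.1 t.2.2) := by
    intro a ha
    rw [gadget_adj] at ha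
    rcases ha.2 with h | h
    · cases h with
      | star i o j => exact ⟨(i, o, j), rfl⟩
    · cases h
  have hSbsub : Sb ⊆ _ := fun a ha => hadjNS a (arc_adj hpart hb hr (Or.inl ha))
  have hSrsub : Sr ⊆ _ := fun a ha => hadjNS a (arc_adj hpart hb hr (Or.inr ha))
  have hwNS := hadjNS w ((arc_adj hpart hb hr hw).symm)
  have hwSb : w ∉ Sb := fun h => no_rev hpart hb hr (Or.inl h) hw
  have hwSr : w ∉ Sr := fun h => no_rev hpart hb hr (Or.inr h) hw
  have hdisj : Disjoint Sb Sr := by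
    rw [Set.disjoint_left]
    intro a ha ha'
    exact Set.disjoint_left.1 hpart.2.2.2.2.1 (hb.1.1 _ _ ha) (hr.1.1 _ _ ha')
  have hSbcard : Sb.ncard = 3 * n := by
    rw [← Nat.card_coe_set_eq]
    have := hb.2 .s
    exact this
  have hSrcard : Sr.ncard = 3 * n := by
    rw [← Nat.card_coe_set_eq]
    have := hr.2 .s
    exact this
  have hsub : Sb ∪ Sr ∪ {w} ⊆
      Set.range (fun t : Fin n × Bool × Fin 3 => GVert.u t.1 t.2.1 t.2.2) := by
    intro a ha
    rcases ha with (ha | ha) | ha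
    · exact hSbsub ha
    · exact hSrsub ha
    · rcases ha with rfl; exact hwNS
  have hd2 : Disjoint (Sb ∪ Sr) {w} := by
    rw [Set.disjoint_right]
    rintro a rfl
    rintro (h | h)
    · exact hwSb h
    · exact hwSr h
  have hcard : (Sb ∪ Sr ∪ {w}).ncard = 6 * n + 1 := by
    rw [Set.ncard_union_eq hd2 (Set.toFinite _) (Set.toFinite _),
      Set.ncard_union_eq hdisj (Set.toFinite _) (Set.toFinite _),
      hSbcard, hSrcard, Set.ncard_singleton]
    ring
  have hle := Set.ncard_le_ncard hsub (Set.toFinite _)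
  rw [hcard, hNScard] at hle
  omega

end Aux2
section Aux3

variable {α : Type*} [DecidableEq α] {n : ℕ} {cl : Fin n → Fin 3 → α}

lemma adj_u_cases {i : Fin n} {o : Bool} {j : Fin 3} {w : GVert n}
    (h : (gadgetGraph cl).Adj (.u i o j) w) :
    w = .s ∨ w = .v i o j ∨ ∃ j', j' ≠ j ∧ w = .u i o j' := by
  rw [gadget_adj] at h
  rcases h.2 with h' | h'
  · cases h' with
    | tri i o hjj => exact Or.inr (Or.inr ⟨_, Ne.symm hjj, rfl⟩)
    | mat i o j => exact Or.inr (Or.inl rfl)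
  · cases h' with
    | star i o j => exact Or.inl rfl
    | tri i o hjj => exact Or.inr (Or.inr ⟨_, hjj, rfl⟩)

lemma adj_v_cases {i : Fin n} {o : Bool} {j : Fin 3} {w : GVert n}
    (h : (gadgetGraph cl).Adj (.v i o j) w) :
    w = .u i o j ∨
    (o = false ∧ w = .v i true j) ∨
    (o = true ∧ w = .v i false j) ∨
    (o = true ∧ w = .v (nextOcc cl (i, j)).1 false (nextOcc cl (i, j)).2) ∨
    (o = false ∧ ∃ q, nextOcc cl q = (i, j) ∧ w = .v q.1 true q.2) := by
  rw [gadget_adj] at h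
  rcases h.2 with h' | h'
  · cases h' with
    | cycA p => exact Or.inr (Or.inl ⟨rfl, rfl⟩)
    | cycB p =>
        refine Or.inr (Or.inr (Or.inr (Or.inl ⟨rfl, ?_⟩)))
        rfl
  · cases h' with
    | mat i o j => exact Or.inl rfl
    | cycA p => exact Or.inr (Or.inr (Or.inl ⟨rfl, rfl⟩))
    | cycB p =>
        exact Or.inr (Or.inr (Or.inr (Or.inr ⟨rfl, p, rfl, rfl⟩)))

end Aux3
section Aux4

variable {α : Type*} [DecidableEq α] {n : ℕ} {cl : Fin n → Fin 3 → α}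
  {B R : SimpleGraph (GVert n)} {db dr : GVert n → GVert n → Prop}

private lemma fin3_cover {j j' jb jr : Fin 3} (h1 : j' ≠ j) (h2 : jb ≠ j)
    (h3 : jr ≠ j) (h4 : jb ≠ jr) : j' = jb ∨ j' = jr := by
  revert h1 h2 h3 h4; revert j j' jb jr; decide

private lemma fin3_third {j j1 : Fin 3} (h : j1 ≠ j) :
    ∃ j2, j2 ≠ j ∧ j2 ≠ j1 ∧ ∀ j'', j'' ≠ j → j'' ≠ j1 → j'' = j2 := by
  revert h; revert j j1; decide

lemma u_targets (hpart : IsTreePartition (gadgetGraph cl) B R)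
    (hb : IsMOrientation B.edgeSet (bvec n) db)
    (hr : IsMOrientation R.edgeSet (rvec n) dr) (i : Fin n) (o : Bool) (j : Fin 3) :
    ∃ wb wr, wb ≠ wr ∧ db (.u i o j) wb ∧ dr (.u i o j) wr ∧
      (∀ w, (db (.u i o j) w ∨ dr (.u i o j) w) → w = wb ∨ w = wr) ∧
      (∀ w, (db (.u i o j) w ∨ dr (.u i o j) w) →
        w = .v i o j ∨ ∃ j', j' ≠ j ∧ w = .u i o j') := by
  obtain ⟨wb, hwb, hwbu⟩ := card_subtype_one (by simpa [bvec] using hb.2 (.u i o j))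
  obtain ⟨wr, hwr, hwru⟩ := card_subtype_one (by simpa [rvec] using hr.2 (.u i o j))
  have hne : wb ≠ wr := by
    rintro rfl
    exact Set.disjoint_left.1 hpart.2.2.2.2.1 (hb.1.1 _ _ hwb) (hr.1.1 _ _ hwr)
  refine ⟨wb, wr, hne, hwb, hwr, ?_, ?_⟩
  · rintro w (h | h)
    · exact Or.inl (hwbu w h)
    · exact Or.inr (hwru w h)
  · intro w hw
    rcases adj_u_cases (arc_adj hpart hb hr hw) with h | h | h
    · subst h; exact absurd hw (no_into_s hpart hb hr _)
    · exact Or.inl h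
    · exact Or.inr h

/-- Step B: every matching edge is oriented from the `u`-vertex to the
`v`-vertex. -/
lemma no_into_u (hpart : IsTreePartition (gadgetGraph cl) B R)
    (hb : IsMOrientation B.edgeSet (bvec n) db)
    (hr : IsMOrientation R.edgeSet (rvec n) dr) (i : Fin n) (o : Bool) (j : Fin 3) :
    ¬ (db (.v i o j) (.u i o j) ∨ dr (.v i o j) (.u i o j)) := by
  intro h
  -- stage 1: both out-arcs of `u i o j` go to triangle neighbours
  have stage1 : ∀ j', j' ≠ j →
      db (.u i o j) (.u i o j') ∨ dr (.u i o j) (.u i o j') := by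
    obtain ⟨wb, wr, hne, hwb, hwr, hcover, hshape⟩ := u_targets hpart hb hr i o j
    have hbshape : ∃ jb, jb ≠ j ∧ wb = GVert.u i o jb := by
      rcases hshape wb (Or.inl hwb) with h' | h'
      · exact absurd h (by rw [← h'] at h ⊢; exact no_rev hpart hb hr (Or.inl (h' ▸ hwb)))
      · exact h'
    have hrshape : ∃ jr, jr ≠ j ∧ wr = GVert.u i o jr := by
      rcases hshape wr (Or.inr hwr) with h' | h'
      · exact absurd h (by rw [← h'] at h ⊢; exact no_rev hpart hb hr (Or.inr (h' ▸ hwr)))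
      · exact h'
    obtain ⟨jb, hjb, rfl⟩ := hbshape
    obtain ⟨jr, hjr, rfl⟩ := hrshape
    have hjbr : jb ≠ jr := fun hh => hne (by rw [hh])
    intro j' hj'
    rcases fin3_cover hj' hjb hjr hjbr with rfl | rfl
    · exact Or.inl hwb
    · exact Or.inr hwr
  -- stage 2: fix j1 ≠ j; then u j1 sends an arc to u j2
  have hsucc : ∀ j : Fin 3, j + 1 ≠ j := by decide
  obtain ⟨j1, hj1⟩ : ∃ j1, j1 ≠ j := ⟨j + 1, hsucc j⟩
  obtain ⟨j2, hj2, hj21, hthird⟩ := fin3_third hj1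
  have harc1 : db (.u i o j) (.u i o j1) ∨ dr (.u i o j) (.u i o j1) := stage1 j1 hj1
  have harc2 : db (.u i o j) (.u i o j2) ∨ dr (.u i o j) (.u i o j2) := stage1 j2 hj2
  have stage2 : db (.u i o j1) (.u i o j2) ∨ dr (.u i o j1) (.u i o j2) := by
    obtain ⟨wb, wr, hne, hwb, hwr, hcover, hshape⟩ := u_targets hpart hb hr i o j1
    have key : ∀ w, (db (.u i o j1) w ∨ dr (.u i o j1) w) →
        w = .u i o j2 ∨ w = .v i o j1 := by
      intro w hw
      rcases hshape w hw with h' | h'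
      · exact Or.inr h'
      · obtain ⟨j', hj', rfl⟩ := h'
        have : j' ≠ j := by
          rintro rfl
          exact no_rev hpart hb hr harc1 hw
        exact Or.inl (by rw [hthird j' this hj'])
    rcases key wb (Or.inl hwb) with h' | h'
    · exact Or.inl (h' ▸ hwb)
    · rcases key wr (Or.inr hwr) with h'' | h''
      · exact Or.inr (h'' ▸ hwr)
      · exact absurd (h'' ▸ h' ▸ rfl : wb = wr) hne
  -- stage 3: contradiction at u j2
  obtain ⟨wb, wr, hne, hwb, hwr, hcover, hshape⟩ := u_targets hpart hb hr i o j2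
  have key : ∀ w, (db (.u i o j2) w ∨ dr (.u i o j2) w) → w = .v i o j2 := by
    intro w hw
    rcases hshape w hw with h' | h'
    · exact h'
    · obtain ⟨j', hj', rfl⟩ := h'
      have hj'j : j' ≠ j := by
        rintro rfl
        exact no_rev hpart hb hr harc2 hw
      have hj'1 : j' ≠ j1 := by
        rintro rfl
        exact no_rev hpart hb hr stage2 hw
      exact absurd (hthird j' hj'j hj'1) (by
        rintro rfl
        exact hj' rfl)
  exact hne ((key wb (Or.inl hwb)).trans (key wr (Or.inr hwr)).symm)

end Aux4
section Aux5

variable {α : Type*} [DecidableEq α] {n : ℕ} {cl : Fin n → Fin 3 → α}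
  {B R : SimpleGraph (GVert n)} {db dr : GVert n → GVert n → Prop}

lemma v_false_out (hpart : IsTreePartition (gadgetGraph cl) B R)
    (hb : IsMOrientation B.edgeSet (bvec n) db)
    (hr : IsMOrientation R.edgeSet (rvec n) dr) (i : Fin n) (j : Fin 3) :
    ∃ w, db (.v i false j) w ∧ (∀ w', db (.v i false j) w' → w' = w) ∧
      (∀ w', ¬ dr (.v i false j) w') := by
  obtain ⟨w, hw, hwu⟩ := card_subtype_one (by simpa [bvec] using hb.2 (.v i false j))
  exact ⟨w, hw, hwu, card_subtype_zero (by simpa [rvec] using hr.2 (.v i false j))⟩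

lemma v_true_out (hpart : IsTreePartition (gadgetGraph cl) B R)
    (hb : IsMOrientation B.edgeSet (bvec n) db)
    (hr : IsMOrientation R.edgeSet (rvec n) dr) (i : Fin n) (j : Fin 3) :
    ∃ w, dr (.v i true j) w ∧ (∀ w', dr (.v i true j) w' → w' = w) ∧
      (∀ w', ¬ db (.v i true j) w') := by
  obtain ⟨w, hw, hwu⟩ := card_subtype_one (by simpa [rvec] using hr.2 (.v i true j))
  exact ⟨w, hw, hwu, card_subtype_zero (by simpa [bvec] using hb.2 (.v i true j))⟩

lemma v_false_target (hpart : IsTreePartition (gadgetGraph cl) B R)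
    (hb : IsMOrientation B.edgeSet (bvec n) db)
    (hr : IsMOrientation R.edgeSet (rvec n) dr) {i : Fin n} {j : Fin 3}
    {w : GVert n} (h : db (.v i false j) w ∨ dr (.v i false j) w) :
    w = .v i true j ∨ ∃ q, nextOcc cl q = (i, j) ∧ w = .v q.1 true q.2 := by
  rcases adj_v_cases (arc_adj hpart hb hr h) with h' | h' | h' | h' | h'
  · subst h'; exact absurd h (no_into_u hpart hb hr i false j)
  · exact Or.inl h'.2
  · exact absurd h'.1 (by simp)
  · exact absurd h'.1 (by simp)
  · exact Or.inr h'.2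

lemma v_true_target (hpart : IsTreePartition (gadgetGraph cl) B R)
    (hb : IsMOrientation B.edgeSet (bvec n) db)
    (hr : IsMOrientation R.edgeSet (rvec n) dr) {i : Fin n} {j : Fin 3}
    {w : GVert n} (h : db (.v i true j) w ∨ dr (.v i true j) w) :
    w = .v i false j ∨
      w = .v (nextOcc cl (i, j)).1 false (nextOcc cl (i, j)).2 := by
  rcases adj_v_cases (arc_adj hpart hb hr h) with h' | h' | h' | h' | h'
  · subst h'; exact absurd h (no_into_u hpart hb hr i true j)
  · exact absurd h'.1 (by simp)
  · exact Or.inl h'.2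
  · exact Or.inr h'.2
  · exact absurd h'.1 (by simp)

/-- the cycle edges are in the graph -/
lemma adj_cycA (cl : Fin n → Fin 3 → α) (p : Fin n × Fin 3) :
    (gadgetGraph cl).Adj (.v p.1 false p.2) (.v p.1 true p.2) := by
  rw [gadget_adj]
  exact ⟨by simp, Or.inl (.cycA p)⟩

/-- membership in `occs` propagates through coincidences of `nextOcc` -/
lemma mem_occs_of_nextOcc_mem {x : α} {q t : Fin n × Fin 3}
    (cl : Fin n → Fin 3 → α) (hq : nextOcc cl q = t) (ht : t ∈ occs cl x) :
    q ∈ occs cl x := by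
  have hq' : q ∈ occs cl (cl q.1 q.2) := (mem_occs_iff cl _ q).2 rfl
  have h2 : nextOcc cl q ∈ occs cl (cl q.1 q.2) := nextOcc_mem cl hq'
  rw [hq] at h2
  rw [mem_occs_iff] at h2 ht ⊢
  exact h2.symm.trans ht

end Aux5

/-- In every `(b,r)`-partition of `G(Π)`, with any
`b`-orientation of the blue tree and `r`-orientation of the red tree, for
every variable `x` the cycle `Δ_x` is oriented as a directed cycle (all its
edges are oriented consistently one way around, i.e. all forward or all
backward), and its edges alternate in color between blue and red (the edges
`v p false — v p true` all get one color and the edges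
`v p true — v (nextOcc p) false` all get the other). -/
theorem stmt11 {α : Type*} [DecidableEq α] {n : ℕ} (cl : Fin n → Fin 3 → α)
    (hcl : ∀ i, Function.Injective (cl i)) (B R : SimpleGraph (GVert n))
    (hpart : IsTreePartition (gadgetGraph cl) B R)
    (db dr : GVert n → GVert n → Prop)
    (hb : IsMOrientation B.edgeSet (bvec n) db)
    (hr : IsMOrientation R.edgeSet (rvec n) dr) :
    ∀ x : α,
      ((∀ p ∈ occs cl x,
          OrientedTo B R db dr (GVert.v p.1 false p.2) (GVert.v p.1 true p.2) ∧
          OrientedTo B R db dr (GVert.v p.1 true p.2)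
            (GVert.v (nextOcc cl p).1 false (nextOcc cl p).2)) ∨
       (∀ p ∈ occs cl x,
          OrientedTo B R db dr (GVert.v p.1 true p.2) (GVert.v p.1 false p.2) ∧
          OrientedTo B R db dr (GVert.v (nextOcc cl p).1 false (nextOcc cl p).2)
            (GVert.v p.1 true p.2))) ∧
      ((∀ p ∈ occs cl x,
          s(GVert.v p.1 false p.2, GVert.v p.1 true p.2) ∈ B.edgeSet ∧
          s(GVert.v p.1 true p.2,
            GVert.v (nextOcc cl p).1 false (nextOcc cl p).2) ∈ R.edgeSet) ∨
       (∀ p ∈ occs cl x,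
          s(GVert.v p.1 false p.2, GVert.v p.1 true p.2) ∈ R.edgeSet ∧
          s(GVert.v p.1 true p.2,
            GVert.v (nextOcc cl p).1 false (nextOcc cl p).2) ∈ B.edgeSet)) := by
  
  intro x
  -- `Fwd p` means the edge `v p false — v p true` is oriented "forward"
  have hG1 : ∀ p ∈ occs cl x,
      (db (GVert.v p.1 false p.2) (GVert.v p.1 true p.2) ∨
        dr (GVert.v p.1 false p.2) (GVert.v p.1 true p.2)) →
      db (GVert.v p.1 false p.2) (GVert.v p.1 true p.2) ∧
      dr (GVert.v p.1 true p.2) (GVert.v (nextOcc cl p).1 false (nextOcc cl p).2) := by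
    intro p hp hF
    obtain ⟨w0, hw0, hw0u, hnored⟩ := v_false_out hpart hb hr p.1 p.2
    have hdb : db (GVert.v p.1 false p.2) (GVert.v p.1 true p.2) := by
      rcases hF with h | h
      · exact h
      · exact absurd h (hnored _)
    obtain ⟨w, hw, hwu, hnoblue⟩ := v_true_out hpart hb hr p.1 p.2
    rcases v_true_target hpart hb hr (Or.inr hw) with h' | h'
    · subst h'
      exact absurd (Or.inr hw) (no_rev hpart hb hr (Or.inl hdb))
    · subst h'
      exact ⟨hdb, hw⟩
  have hG2 : ∀ p ∈ occs cl x,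
      (db (GVert.v p.1 false p.2) (GVert.v p.1 true p.2) ∨
        dr (GVert.v p.1 false p.2) (GVert.v p.1 true p.2)) →
      (db (GVert.v (nextOcc cl p).1 false (nextOcc cl p).2)
          (GVert.v (nextOcc cl p).1 true (nextOcc cl p).2) ∨
        dr (GVert.v (nextOcc cl p).1 false (nextOcc cl p).2)
          (GVert.v (nextOcc cl p).1 true (nextOcc cl p).2)) := by
    intro p hp hF
    obtain ⟨hdb, hdr⟩ := hG1 p hp hF
    obtain ⟨w, hw, hwu, hnored⟩ :=
      v_false_out hpart hb hr (nextOcc cl p).1 (nextOcc cl p).2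
    rcases v_false_target hpart hb hr (Or.inl hw) with h' | ⟨q, hq, h'⟩
    · subst h'
      exact Or.inl hw
    · subst h'
      have hq' : nextOcc cl q = nextOcc cl p := hq
      have hqmem : q ∈ occs cl x :=
        mem_occs_of_nextOcc_mem cl hq' (nextOcc_mem cl hp)
      have hqp : q = p := nextOcc_injOn cl hqmem hp hq'
      subst hqp
      exact absurd (Or.inr hdr) (no_rev hpart hb hr (Or.inl hw))
  have hprop : ∀ (k : ℕ), ∀ p ∈ occs cl x,
      (db (GVert.v p.1 false p.2) (GVert.v p.1 true p.2) ∨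
        dr (GVert.v p.1 false p.2) (GVert.v p.1 true p.2)) →
      ((nextOcc cl)^[k] p ∈ occs cl x ∧
        (db (GVert.v ((nextOcc cl)^[k] p).1 false ((nextOcc cl)^[k] p).2)
            (GVert.v ((nextOcc cl)^[k] p).1 true ((nextOcc cl)^[k] p).2) ∨
          dr (GVert.v ((nextOcc cl)^[k] p).1 false ((nextOcc cl)^[k] p).2)
            (GVert.v ((nextOcc cl)^[k] p).1 true ((nextOcc cl)^[k] p).2))) := by
    intro k
    induction k with
    | zero => intro p hp h; exact ⟨hp, h⟩
    | succ k ih =>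
      intro p hp h
      obtain ⟨h1, h2⟩ := ih p hp h
      rw [Function.iterate_succ_apply']
      exact ⟨nextOcc_mem cl h1, hG2 _ h1 h2⟩
  by_cases hF : ∃ p, p ∈ occs cl x ∧
      (db (GVert.v p.1 false p.2) (GVert.v p.1 true p.2) ∨
        dr (GVert.v p.1 false p.2) (GVert.v p.1 true p.2))
  · -- forward everywhere
    obtain ⟨p0, hp0, hf0⟩ := hF
    have hall : ∀ p ∈ occs cl x,
        db (GVert.v p.1 false p.2) (GVert.v p.1 true p.2) ∧
        dr (GVert.v p.1 true p.2)
          (GVert.v (nextOcc cl p).1 false (nextOcc cl p).2) := by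
      intro p hp
      obtain ⟨k, hk⟩ := nextOcc_orbit cl hp0 hp
      have hk2 := (hprop k p0 hp0 hf0).2
      rw [hk] at hk2
      exact hG1 p hp hk2
    constructor
    · left
      intro p hp
      obtain ⟨h1, h2⟩ := hall p hp
      exact ⟨Or.inl ⟨hb.1.1 _ _ h1, h1⟩, Or.inr ⟨hr.1.1 _ _ h2, h2⟩⟩
    · left
      intro p hp
      obtain ⟨h1, h2⟩ := hall p hp
      exact ⟨hb.1.1 _ _ h1, hr.1.1 _ _ h2⟩
  · -- backward everywhere
    push_neg at hF
    have hall : ∀ p ∈ occs cl x,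
        dr (GVert.v p.1 true p.2) (GVert.v p.1 false p.2) ∧
        db (GVert.v (nextOcc cl p).1 false (nextOcc cl p).2)
          (GVert.v p.1 true p.2) := by
      intro p hp
      have hnf := not_or.2 (hF p hp)
      have hout : db (GVert.v p.1 true p.2) (GVert.v p.1 false p.2) ∨
          dr (GVert.v p.1 true p.2) (GVert.v p.1 false p.2) :=
        (arc_total hpart hb hr (adj_cycA cl p)).resolve_left hnf
      obtain ⟨w, hw, hwu, hnoblue⟩ := v_true_out hpart hb hr p.1 p.2
      have hdr1 : dr (GVert.v p.1 true p.2) (GVert.v p.1 false p.2) := by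
        rcases hout with h | h
        · exact absurd h (hnoblue _)
        · exact h
      obtain ⟨w', hw', hwu', hnored⟩ :=
        v_false_out hpart hb hr (nextOcc cl p).1 (nextOcc cl p).2
      rcases v_false_target hpart hb hr (Or.inl hw') with h' | ⟨q, hq, h'⟩
      · subst h'
        exact absurd (Or.inl hw') (not_or.2 (hF (nextOcc cl p) (nextOcc_mem cl hp)))
      · subst h'
        have hq' : nextOcc cl q = nextOcc cl p := hq
        have hqmem : q ∈ occs cl x :=
          mem_occs_of_nextOcc_mem cl hq' (nextOcc_mem cl hp)
        have hqp : q = p := nextOcc_injOn cl hqmem hp hq'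
        subst hqp
        exact ⟨hdr1, hw'⟩
    constructor
    · right
      intro p hp
      obtain ⟨h1, h2⟩ := hall p hp
      exact ⟨Or.inr ⟨hr.1.1 _ _ h1, h1⟩, Or.inl ⟨hb.1.1 _ _ h2, h2⟩⟩
    · right
      intro p hp
      obtain ⟨h1, h2⟩ := hall p hp
      constructor
      · rw [Sym2.eq_swap]
        exact hr.1.1 _ _ h1
      · rw [Sym2.eq_swap]
        exact hb.1.1 _ _ h2
end

section
/- Let Π be an instance of NotAllEqual 3-SAT with n clauses and G(Π)=(V,E), b, r the associated construction. In every (b,r)-partition of E, for every variable x and any two consecutive v-vertices v^{C}_x and v^{D}_x on the cycle Δ_x (one from an original-clause gadget, the other from a copy gadget), the matching edges u^{C}_x v^{C}_x and u^{D}_x v^{D}_x belong to different spanning trees. -/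
/-! ### Auxiliary material for the proof of Statement 13. -/

namespace Stmt13Aux

instance {n : ℕ} : Finite (GVert n) := by
  apply Finite.of_injective (β := Option (Bool × Fin n × Bool × Fin 3))
    (fun g => match g with
      | .s => none
      | .u i o j => some (false, i, o, j)
      | .v i o j => some (true, i, o, j))
  intro a b h
  cases a <;> cases b <;> simp_all

variable {α : Type*} [DecidableEq α] {n : ℕ} {cl : Fin n → Fin 3 → α} {x : α}

lemma mem_occs_iff {p : Fin n × Fin 3} : p ∈ occs cl x ↔ cl p.1 p.2 = x := by
  simp [occs]

lemma nextOcc_eq {p : Fin n × Fin 3} (h : cl p.1 p.2 = x) :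
    nextOcc cl p = (occs cl x).toList.next p
      (by simp [occs, Finset.mem_toList, h]) := by
  subst h; rfl

lemma nextOcc_mem {p : Fin n × Fin 3} (h : p ∈ occs cl x) :
    nextOcc cl p ∈ occs cl x := by
  rw [mem_occs_iff] at h
  rw [nextOcc_eq h, ← Finset.mem_toList]
  exact List.next_mem _ _ _

lemma nextOcc_inj {p q : Fin n × Fin 3} (hp : p ∈ occs cl x) (hq : q ∈ occs cl x)
    (h : nextOcc cl p = nextOcc cl q) : p = q := by
  rw [mem_occs_iff] at hp hq
  have h1 := List.prev_next (occs cl x).toList (Finset.nodup_toList _) p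
    (by simp [Finset.mem_toList, mem_occs_iff, hp])
  have h2 := List.prev_next (occs cl x).toList (Finset.nodup_toList _) q
    (by simp [Finset.mem_toList, mem_occs_iff, hq])
  rw [nextOcc_eq hp] at h
  rw [nextOcc_eq hq] at h
  rw [← h1, ← h2]
  congr 1

lemma mem_occs_of_nextOcc {p q : Fin n × Fin 3} (h : nextOcc cl p = q)
    (hq : q ∈ occs cl x) : p ∈ occs cl x := by
  have h1 : nextOcc cl p ∈ occs cl (cl p.1 p.2) := nextOcc_mem (by simp [mem_occs_iff])
  rw [h, mem_occs_iff] at h1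
  rw [mem_occs_iff] at hq ⊢
  rw [← h1, hq]

open Classical in
lemma counting_lemma {ι : Type*} (S : Finset ι) (σ : ι → ι)
    (hσS : ∀ q ∈ S, σ q ∈ S)
    (hinj : ∀ p ∈ S, ∀ q ∈ S, σ p = σ q → p = q)
    (P Q : ι → Prop)
    (h1 : ∀ q ∈ S, P q ∨ Q q)
    (h2 : ∀ q ∈ S, ¬(Q q ∧ P (σ q))) :
    ∀ q ∈ S, (P q ↔ ¬ Q q) ∧ (Q q ↔ ¬ P (σ q)) := by
  classical
  set f : ι → ℕ := fun q => (if P q then 1 else 0) + (if Q q then 1 else 0) with hf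
  set g : ι → ℕ := fun q => (if Q q then 1 else 0) + (if P (σ q) then 1 else 0) with hg
  have himg : S.image σ = S := by
    apply Finset.eq_of_subset_of_card_le
    · intro y hy
      obtain ⟨z, hz, rfl⟩ := Finset.mem_image.1 hy
      exact hσS z hz
    · rw [Finset.card_image_of_injOn (fun a ha b hb => hinj a ha b hb)]
  have hreidx : ∑ q ∈ S, (if P (σ q) then 1 else 0) = ∑ q ∈ S, (if P q then 1 else 0) := by
    conv_rhs => rw [← himg]
    rw [Finset.sum_image (fun a ha b hb => hinj a ha b hb)]
  have hsum : ∑ q ∈ S, f q = ∑ q ∈ S, g q := by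
    simp only [hf, hg, Finset.sum_add_distrib, hreidx]
    ring
  have hf1 : ∀ q ∈ S, 1 ≤ f q := by
    intro q hq
    rcases h1 q hq with h | h <;> simp [hf, h]
  have hg1 : ∀ q ∈ S, g q ≤ 1 := by
    intro q hq
    have := h2 q hq
    by_cases hQ : Q q <;> by_cases hP : P (σ q) <;> simp [hg, hQ, hP] at this ⊢
  have hcard_le : S.card ≤ ∑ q ∈ S, f q := by
    calc S.card = ∑ _q ∈ S, 1 := by simp
    _ ≤ ∑ q ∈ S, f q := Finset.sum_le_sum hf1
  have hle_card : ∑ q ∈ S, g q ≤ S.card := by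
    calc ∑ q ∈ S, g q ≤ ∑ _q ∈ S, 1 := Finset.sum_le_sum hg1
    _ = S.card := by simp
  have hfeq : ∑ q ∈ S, f q = S.card := le_antisymm (hsum ▸ hle_card) hcard_le
  have hfq : ∀ q ∈ S, f q = 1 := by
    intro q hq
    by_contra hne
    have h2le : 2 ≤ f q := by have := hf1 q hq; omega
    have hlt : S.card < S.card := by
      calc S.card = ∑ _q ∈ S, 1 := by simp
      _ < ∑ q ∈ S, f q := Finset.sum_lt_sum hf1 ⟨q, hq, by omega⟩
      _ = S.card := hfeq
    exact lt_irrefl _ hlt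
  have hgq : ∀ q ∈ S, g q = 1 := by
    intro q hq
    by_contra hne
    have h0 : g q = 0 := by have := hg1 q hq; omega
    have hlt : S.card < S.card := by
      calc S.card = ∑ q ∈ S, f q := hfeq.symm
      _ = ∑ q ∈ S, g q := hsum
      _ < ∑ _q ∈ S, 1 := Finset.sum_lt_sum hg1 ⟨q, hq, by omega⟩
      _ = S.card := by simp
    exact lt_irrefl _ hlt
  intro q hq
  have hfv := hfq q hq
  have hgv := hgq q hq
  constructor
  · by_cases hP : P q <;> by_cases hQ : Q q <;> simp [hf, hP, hQ] at hfv ⊢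
  · by_cases hP : P (σ q) <;> by_cases hQ : Q q <;> simp [hg, hP, hQ] at hgv ⊢

lemma iff_not_of_iff_iff {a b A : Prop} (h : (a ↔ A) ↔ ¬(b ↔ A)) : a ↔ ¬b := by
  by_cases hA : A <;> by_cases ha : a <;> by_cases hb : b <;> tauto

lemma iff_trans_not {a b rb : Prop} (h1 : a ↔ ¬b) (h2 : b ↔ ¬rb) : a ↔ rb := by
  by_cases ha : a <;> by_cases hb : b <;> by_cases hr : rb <;> tauto

lemma finale_logic {a b c A A' rb rc : Prop}
    (hPQ : (a ↔ A) ↔ ¬(b ↔ A)) (hQP : (b ↔ A) ↔ ¬(c ↔ A'))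
    (hAc : A' ↔ A) (m2 : b ↔ ¬rb) (m3 : c ↔ ¬rc) : (a ↔ rb) ∧ (b ↔ rc) := by
  have hQP' : (b ↔ A) ↔ ¬(c ↔ A) := by rw [hAc] at hQP; exact hQP
  exact ⟨iff_trans_not (iff_not_of_iff_iff hPQ) m2,
    iff_trans_not (iff_not_of_iff_iff hQP') m3⟩

lemma walk_confined {V : Type*} {T : SimpleGraph V} {a b : V}
    (ha : ∀ z, T.Adj a z → z = b) (hb : ∀ z, T.Adj b z → z = a) :
    ∀ {c w : V}, (c = a ∨ c = b) → T.Walk c w → (w = a ∨ w = b) := by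
  intro c w hc p
  induction p with
  | nil => exact hc
  | @cons c d w h _p ih =>
    rcases hc with rfl | rfl
    · exact ih (Or.inr (ha d h))
    · exact ih (Or.inl (hb d h))

lemma trap_lemma {V : Type*} {T : SimpleGraph V} (hc : T.Connected) {a b s0 : V}
    (hsa : s0 ≠ a) (hsb : s0 ≠ b)
    (ha : ∀ z, T.Adj a z → z = b) (hb : ∀ z, T.Adj b z → z = a) : False := by
  obtain ⟨p⟩ := hc.preconnected a s0
  rcases walk_confined ha hb (Or.inl rfl) p with h | h
  · exact hsa h
  · exact hsb h

lemma exists_adj {V : Type*} {T : SimpleGraph V} (hc : T.Connected) {y z : V}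
    (h : y ≠ z) : ∃ w, T.Adj y w := by
  obtain ⟨p⟩ := hc.preconnected y z
  cases p with
  | nil => exact absurd rfl h
  | cons hadj _ => exact ⟨_, hadj⟩

lemma morient_not_out {V : Type*} [Finite V] {F : Set (Sym2 V)} {m : V → ℕ}
    {d : V → V → Prop} (h : IsMOrientation F m d) {a : V} (ha : m a = 0)
    (z : V) : ¬ d a z := by
  intro hz
  have h0 := h.2 a
  rw [ha] at h0
  haveI : Nonempty {w // d a w} := ⟨⟨z, hz⟩⟩
  have := Nat.card_pos (α := {w // d a w})
  omega

lemma morient_out_unique {V : Type*} [Finite V] {F : Set (Sym2 V)} {m : V → ℕ}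
    {d : V → V → Prop} (h : IsMOrientation F m d) {a : V} (ha : m a = 1)
    {z z' : V} (hz : d a z) (hz' : d a z') : z = z' := by
  have h1 := h.2 a
  rw [ha] at h1
  obtain ⟨w, hw⟩ := Nat.card_eq_one_iff_exists.1 h1
  have e1 := hw ⟨z, hz⟩
  have e2 := hw ⟨z', hz'⟩
  have : (⟨z, hz⟩ : {w // d a w}) = ⟨z', hz'⟩ := e1.trans e2.symm
  exact congrArg Subtype.val this

/-- `v`-vertex of the original gadget at occurrence `q`. -/
def vfV {n : ℕ} (q : Fin n × Fin 3) : GVert n := GVert.v q.1 false q.2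

/-- `v`-vertex of the copy gadget at occurrence `q`. -/
def vtV {n : ℕ} (q : Fin n × Fin 3) : GVert n := GVert.v q.1 true q.2

/-- The cycle edge `v q false — v q true`. -/
def eA {n : ℕ} (q : Fin n × Fin 3) : Sym2 (GVert n) := s(vfV q, vtV q)

/-- The cycle edge `v q true — v (next q) false`. -/
noncomputable def eB {α : Type*} [DecidableEq α] {n : ℕ} (cl : Fin n → Fin 3 → α)
    (q : Fin n × Fin 3) : Sym2 (GVert n) := s(vtV q, vfV (nextOcc cl q))

lemma adj_vf {i : Fin n} {j : Fin 3} {z : GVert n}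
    (h : (gadgetGraph cl).Adj (.v i false j) z) :
    z = .u i false j ∨ z = .v i true j ∨
      ∃ p : Fin n × Fin 3, nextOcc cl p = (i, j) ∧ z = .v p.1 true p.2 := by
  rw [gadgetGraph, SimpleGraph.fromRel_adj] at h
  obtain ⟨-, h | h⟩ := h
  · cases h with
    | cycA p => right; left; rfl
  · cases h with
    | mat i o j => left; rfl
    | cycB p => right; right; exact ⟨p, rfl, rfl⟩

lemma adj_vt {i : Fin n} {j : Fin 3} {z : GVert n}
    (h : (gadgetGraph cl).Adj (.v i true j) z) :
    z = .u i true j ∨ z = .v i false j ∨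
      z = .v (nextOcc cl (i, j)).1 false (nextOcc cl (i, j)).2 := by
  rw [gadgetGraph, SimpleGraph.fromRel_adj] at h
  obtain ⟨-, h | h⟩ := h
  · cases h with
    | cycB p => right; right; rfl
  · cases h with
    | mat i o j => left; rfl
    | cycA p => right; left; rfl

end Stmt13Aux

open Stmt13Aux

set_option maxHeartbeats 1000000

/-- In every `(b,r)`-partition of `G(Π)`, for every variable
`x` and any two consecutive `v`-vertices on the cycle `Δ_x` (one from an
original-clause gadget and one from a copy gadget), the matching edges
attached to them belong to different spanning trees. The consecutive pairs on
`Δ_x` are `(v p false, v p true)` and `(v p true, v (nextOcc p) false)` for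
occurrences `p` of `x`. -/
theorem stmt13 {α : Type*} [DecidableEq α] {n : ℕ} (cl : Fin n → Fin 3 → α)
    (hcl : ∀ i, Function.Injective (cl i)) (B R : SimpleGraph (GVert n))
    (hBR : IsBRPartition (gadgetGraph cl) (bvec n) (rvec n) B R) :
    ∀ x : α, ∀ p ∈ occs cl x,
      (mEdge p false ∈ B.edgeSet ↔ mEdge p true ∈ R.edgeSet) ∧
      (mEdge p true ∈ B.edgeSet ↔ mEdge (nextOcc cl p) false ∈ R.edgeSet) := by
  classical
  obtain ⟨⟨hBG, hRG, hBtree, hRtree, hdisj, huni⟩, ⟨dB, hdB⟩, ⟨dR, hdR⟩⟩ := hBR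
  intro x p hp
  -- every graph edge is in exactly one of the two trees
  have hpart : ∀ e ∈ (gadgetGraph cl).edgeSet, (e ∈ B.edgeSet ↔ e ∉ R.edgeSet) := by
    intro e he
    constructor
    · intro hb hr; exact (Set.disjoint_left.1 hdisj hb) hr
    · intro hr
      have he2 : e ∈ B.edgeSet ∪ R.edgeSet := huni ▸ he
      rcases he2 with h | h
      · exact h
      · exact absurd h hr
  -- edge memberships in the graph
  have hAmem : ∀ q : Fin n × Fin 3, eA q ∈ (gadgetGraph cl).edgeSet := by
    intro q
    rw [eA, SimpleGraph.mem_edgeSet, gadgetGraph, SimpleGraph.fromRel_adj]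
    exact ⟨by simp [vfV, vtV], Or.inl (EdgeSpec.cycA q)⟩
  have hBmem : ∀ q : Fin n × Fin 3, eB cl q ∈ (gadgetGraph cl).edgeSet := by
    intro q
    rw [eB, SimpleGraph.mem_edgeSet, gadgetGraph, SimpleGraph.fromRel_adj]
    exact ⟨by simp [vfV, vtV], Or.inl (EdgeSpec.cycB q)⟩
  have hMmem : ∀ (q : Fin n × Fin 3) (o : Bool),
      mEdge q o ∈ (gadgetGraph cl).edgeSet := by
    intro q o
    rw [mEdge, SimpleGraph.mem_edgeSet, gadgetGraph, SimpleGraph.fromRel_adj]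
    exact ⟨by simp [mEdge], Or.inl (EdgeSpec.mat q.1 o q.2)⟩
  -- forced directions of cycle edges
  have hAdirB : ∀ q : Fin n × Fin 3, eA q ∈ B.edgeSet → dB (vfV q) (vtV q) := by
    intro q h
    rcases (hdB.1.2 (vfV q) (vtV q) h).1 with h' | h'
    · exact h'
    · exact absurd h' (morient_not_out hdB (show bvec n (vtV q) = 0 from rfl) _)
  have hBdirB : ∀ q : Fin n × Fin 3, eB cl q ∈ B.edgeSet →
      dB (vfV (nextOcc cl q)) (vtV q) := by
    intro q h
    rcases (hdB.1.2 (vtV q) (vfV (nextOcc cl q)) h).1 with h' | h'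
    · exact absurd h' (morient_not_out hdB (show bvec n (vtV q) = 0 from rfl) _)
    · exact h'
  have hAdirR : ∀ q : Fin n × Fin 3, eA q ∈ R.edgeSet → dR (vtV q) (vfV q) := by
    intro q h
    rcases (hdR.1.2 (vfV q) (vtV q) h).1 with h' | h'
    · exact absurd h' (morient_not_out hdR (show rvec n (vfV q) = 0 from rfl) _)
    · exact h'
  have hBdirR : ∀ q : Fin n × Fin 3, eB cl q ∈ R.edgeSet →
      dR (vtV q) (vfV (nextOcc cl q)) := by
    intro q h
    rcases (hdR.1.2 (vtV q) (vfV (nextOcc cl q)) h).1 with h' | h'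
    · exact h'
    · exact absurd h' (morient_not_out hdR
        (show rvec n (vfV (nextOcc cl q)) = 0 from rfl) _)
  -- the cycle has no fixed point of `nextOcc`
  have hfix : ∀ q ∈ occs cl x, nextOcc cl q ≠ q := by
    intro q hq hfixq
    have hGa : ∀ z, (gadgetGraph cl).Adj (vfV q) z →
        z = GVert.u q.1 false q.2 ∨ z = vtV q := by
      intro z hz
      rcases adj_vf hz with h | h | ⟨p', hp', h⟩
      · left; exact h
      · right; exact h
      · right
        have hp'q : nextOcc cl p' = q := hp'
        have hp'S : p' ∈ occs cl x := mem_occs_of_nextOcc hp'q hq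
        have hpq : p' = q := nextOcc_inj hp'S hq (by rw [hp'q, hfixq])
        rw [h, hpq]; rfl
    have hGb : ∀ z, (gadgetGraph cl).Adj (vtV q) z →
        z = GVert.u q.1 true q.2 ∨ z = vfV q := by
      intro z hz
      rcases adj_vt hz with h | h | h
      · left; exact h
      · right; exact h
      · right
        rw [h]
        show GVert.v (nextOcc cl q).1 false (nextOcc cl q).2 = vfV q
        rw [hfixq]; rfl
    have key : ∀ T T' : SimpleGraph (GVert n), T ≤ gadgetGraph cl →
        T' ≤ gadgetGraph cl → T.Connected → T'.Connected →
        Disjoint T.edgeSet T'.edgeSet →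
        (∀ e ∈ (gadgetGraph cl).edgeSet, e ∉ T.edgeSet → e ∈ T'.edgeSet) →
        eA q ∈ T.edgeSet → False := by
      intro T T' hTG hT'G hTc hT'c hTd hTu hA
      have hmf : mEdge q false ∈ T'.edgeSet := by
        obtain ⟨w, hw⟩ := exists_adj hT'c (show vfV q ≠ GVert.s by simp [vfV])
        rcases hGa w (hT'G hw) with rfl | rfl
        · rw [mEdge, Sym2.eq_swap]; exact hw
        · exact absurd ((SimpleGraph.mem_edgeSet _).2 hw)
            (fun hh => (Set.disjoint_left.1 hTd hA) hh)
      have hmt : mEdge q true ∈ T'.edgeSet := by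
        obtain ⟨w, hw⟩ := exists_adj hT'c (show vtV q ≠ GVert.s by simp [vtV])
        rcases hGb w (hT'G hw) with rfl | rfl
        · rw [mEdge, Sym2.eq_swap]; exact hw
        · exfalso
          have : eA q ∈ T'.edgeSet := by
            rw [eA, Sym2.eq_swap]; exact hw
          exact (Set.disjoint_left.1 hTd hA) this
      have ca : ∀ z, T.Adj (vfV q) z → z = vtV q := by
        intro z hz
        rcases hGa z (hTG hz) with rfl | rfl
        · exfalso
          have : mEdge q false ∈ T.edgeSet := by
            rw [mEdge, Sym2.eq_swap]; exact hz
          exact (Set.disjoint_left.1 hTd this) hmf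
        · rfl
      have cb : ∀ z, T.Adj (vtV q) z → z = vfV q := by
        intro z hz
        rcases hGb z (hTG hz) with rfl | rfl
        · exfalso
          have : mEdge q true ∈ T.edgeSet := by
            rw [mEdge, Sym2.eq_swap]; exact hz
          exact (Set.disjoint_left.1 hTd this) hmt
        · rfl
      exact trap_lemma hTc (show GVert.s ≠ vfV q by simp [vfV])
        (show GVert.s ≠ vtV q by simp [vtV]) ca cb
    by_cases hA : eA q ∈ B.edgeSet
    · exact key B R hBG hRG hBtree.isConnected hRtree.isConnected hdisj
        (fun e he hn => by
          by_contra hr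
          exact hn ((hpart e he).2 hr)) hA
    · have hAr : eA q ∈ R.edgeSet := by
        by_contra hr
        exact hA ((hpart _ (hAmem q)).2 hr)
      exact key R B hRG hBG hRtree.isConnected hBtree.isConnected hdisj.symm
        (fun e he hn => by
          by_contra hb
          exact hn (not_not.1 (fun hr => hb ((hpart e he).2 hr)))) hAr
  have hσS : ∀ q ∈ occs cl x, nextOcc cl q ∈ occs cl x := fun q hq => nextOcc_mem hq
  have hinj : ∀ a ∈ occs cl x, ∀ b ∈ occs cl x,
      nextOcc cl a = nextOcc cl b → a = b := fun a ha b hb h => nextOcc_inj ha hb h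
  -- Round 1: the cycle edges alternate locally
  have round1 := counting_lemma (occs cl x) (nextOcc cl) hσS hinj
    (fun q => eA q ∈ B.edgeSet) (fun q => eB cl q ∈ B.edgeSet)
    (by
      intro q hq
      by_contra hc
      push_neg at hc
      obtain ⟨hA, hB⟩ := hc
      have hAr : eA q ∈ R.edgeSet := by
        by_contra hr; exact hA ((hpart _ (hAmem q)).2 hr)
      have hBr : eB cl q ∈ R.edgeSet := by
        by_contra hr; exact hB ((hpart _ (hBmem q)).2 hr)
      have d1 := hAdirR q hAr
      have d2 := hBdirR q hBr
      have heq := morient_out_unique hdR (show rvec n (vtV q) = 1 from rfl) d1 d2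
      apply hfix q hq
      have h12 : q.1 = (nextOcc cl q).1 ∧ q.2 = (nextOcc cl q).2 := by
        simpa [vfV] using heq
      exact (Prod.ext h12.1.symm h12.2.symm)
    )
    (by
      intro q hq hc
      obtain ⟨hB, hA⟩ := hc
      have d1 := hBdirB q hB
      have d2 := hAdirB (nextOcc cl q) hA
      have heq := morient_out_unique hdB
        (show bvec n (vfV (nextOcc cl q)) = 1 from rfl) d1 d2
      apply hfix q hq
      have h12 : q.1 = (nextOcc cl q).1 ∧ q.2 = (nextOcc cl q).2 := by
        simpa [vtV] using heq
      exact (Prod.ext h12.1.symm h12.2.symm)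
    )
  have R1c : ∀ q ∈ occs cl x, (eA (nextOcc cl q) ∈ B.edgeSet ↔ eA q ∈ B.edgeSet) := by
    intro q hq
    have h1 := (round1 q hq).1
    have h2 := (round1 q hq).2
    tauto
  -- the two "domino" traps
  have trapA : ∀ q ∈ occs cl x, ∀ T : SimpleGraph (GVert n), T ≤ gadgetGraph cl →
      T.Connected → mEdge q false ∉ T.edgeSet → mEdge q true ∉ T.edgeSet →
      (∀ p' ∈ occs cl x, nextOcc cl p' = q → eB cl p' ∉ T.edgeSet) →
      eB cl q ∉ T.edgeSet → False := by
    intro q hq T hTG hTc hmf hmt hBprev hBq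
    have ca : ∀ z, T.Adj (vfV q) z → z = vtV q := by
      intro z hz
      rcases adj_vf (hTG hz) with rfl | rfl | ⟨p', hp', rfl⟩
      · exact absurd (by rw [mEdge, Sym2.eq_swap]; exact hz) hmf
      · rfl
      · exfalso
        have hp'q : nextOcc cl p' = q := hp'
        have hp'S : p' ∈ occs cl x := mem_occs_of_nextOcc hp'q hq
        apply hBprev p' hp'S hp'q
        show s(vtV p', vfV (nextOcc cl p')) ∈ T.edgeSet
        rw [hp'q, Sym2.eq_swap]
        exact hz
    have cb : ∀ z, T.Adj (vtV q) z → z = vfV q := by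
      intro z hz
      rcases adj_vt (hTG hz) with rfl | rfl | rfl
      · exact absurd (by rw [mEdge, Sym2.eq_swap]; exact hz) hmt
      · rfl
      · exact absurd ((SimpleGraph.mem_edgeSet _).2 hz) hBq
    exact trap_lemma hTc (show GVert.s ≠ vfV q by simp [vfV])
      (show GVert.s ≠ vtV q by simp [vtV]) ca cb
  have trapB : ∀ q ∈ occs cl x, ∀ T : SimpleGraph (GVert n), T ≤ gadgetGraph cl →
      T.Connected → mEdge q true ∉ T.edgeSet →
      mEdge (nextOcc cl q) false ∉ T.edgeSet →
      eA q ∉ T.edgeSet → eA (nextOcc cl q) ∉ T.edgeSet → False := by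
    intro q hq T hTG hTc hmt hmf hA hAσ
    have ca : ∀ z, T.Adj (vtV q) z → z = vfV (nextOcc cl q) := by
      intro z hz
      rcases adj_vt (hTG hz) with rfl | rfl | rfl
      · exact absurd (by rw [mEdge, Sym2.eq_swap]; exact hz) hmt
      · exact absurd (by rw [eA, Sym2.eq_swap]; exact (SimpleGraph.mem_edgeSet _).2 hz) hA
      · rfl
    have cb : ∀ z, T.Adj (vfV (nextOcc cl q)) z → z = vtV q := by
      intro z hz
      rcases adj_vf (hTG hz) with rfl | rfl | ⟨p', hp', rfl⟩
      · exact absurd (by rw [mEdge, Sym2.eq_swap]; exact hz) hmf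
      · exact absurd ((SimpleGraph.mem_edgeSet _).2 hz) hAσ
      · have hp'q : nextOcc cl p' = nextOcc cl q := hp'
        have hp'S : p' ∈ occs cl x := mem_occs_of_nextOcc hp'q (hσS q hq)
        have : p' = q := nextOcc_inj hp'S hq hp'q
        rw [this]; rfl
    exact trap_lemma hTc (show GVert.s ≠ vtV q by simp [vtV])
      (show GVert.s ≠ vfV (nextOcc cl q) by simp [vfV]) ca cb
  -- Round 2: the matching edges alternate
  have round2 := counting_lemma (occs cl x) (nextOcc cl) hσS hinj
    (fun q => (mEdge q false ∈ B.edgeSet ↔ eA q ∈ B.edgeSet))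
    (fun q => (mEdge q true ∈ B.edgeSet ↔ eA q ∈ B.edgeSet))
    (by
      intro q hq
      by_contra hc
      rw [not_or] at hc
      obtain ⟨h1, h2⟩ := hc
      by_cases hA : eA q ∈ B.edgeSet
      · have hf : mEdge q false ∉ B.edgeSet := fun h => h1 (iff_of_true h hA)
        have ht : mEdge q true ∉ B.edgeSet := fun h => h2 (iff_of_true h hA)
        refine trapA q hq B hBG hBtree.isConnected hf ht ?_ ?_
        · intro p' hp' hpq hmem
          have hiff := (round1 p' hp').2
          rw [hpq] at hiff
          exact (hiff.1 hmem) hA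
        · exact ((round1 q hq).1).1 hA
      · have hf : mEdge q false ∈ B.edgeSet := by
          by_contra h; exact h1 (iff_of_false h hA)
        have ht : mEdge q true ∈ B.edgeSet := by
          by_contra h; exact h2 (iff_of_false h hA)
        have hfR : mEdge q false ∉ R.edgeSet := (hpart _ (hMmem q false)).1 hf
        have htR : mEdge q true ∉ R.edgeSet := (hpart _ (hMmem q true)).1 ht
        refine trapA q hq R hRG hRtree.isConnected hfR htR ?_ ?_
        · intro p' hp' hpq hmem
          have hnB : eB cl p' ∉ B.edgeSet := fun h =>
            (Set.disjoint_left.1 hdisj h) hmem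
          have hiff := (round1 p' hp').2
          rw [hpq] at hiff
          exact hA (not_not.1 (mt hiff.2 hnB))
        · intro hmem
          have hnB : eB cl q ∈ B.edgeSet :=
            not_not.1 (fun h => hA ((round1 q hq).1.2 h))
          exact (Set.disjoint_left.1 hdisj hnB) hmem
    )
    (by
      intro q hq hc
      obtain ⟨hQ, hP⟩ := hc
      have hAc := R1c q hq
      by_cases hA : eA q ∈ B.edgeSet
      · have hmt : mEdge q true ∈ B.edgeSet := hQ.2 hA
        have hmf : mEdge (nextOcc cl q) false ∈ B.edgeSet := hP.2 (hAc.2 hA)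
        exact trapB q hq R hRG hRtree.isConnected
          ((hpart _ (hMmem q true)).1 hmt)
          ((hpart _ (hMmem (nextOcc cl q) false)).1 hmf)
          ((hpart _ (hAmem q)).1 hA)
          ((hpart _ (hAmem (nextOcc cl q))).1 (hAc.2 hA))
      · have hmt : mEdge q true ∉ B.edgeSet := fun h => hA (hQ.1 h)
        have hmf : mEdge (nextOcc cl q) false ∉ B.edgeSet :=
          fun h => hA (hAc.1 (hP.1 h))
        exact trapB q hq B hBG hBtree.isConnected hmt hmf hA
          (fun h => hA (hAc.1 h))
    )
  obtain ⟨hPQ, hQP⟩ := round2 p hp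
  have hAc := R1c p hp
  have m2 : mEdge p true ∈ B.edgeSet ↔ ¬ mEdge p true ∈ R.edgeSet :=
    hpart _ (hMmem p true)
  have m3 : mEdge (nextOcc cl p) false ∈ B.edgeSet ↔
      ¬ mEdge (nextOcc cl p) false ∈ R.edgeSet :=
    hpart _ (hMmem (nextOcc cl p) false)
  exact finale_logic hPQ hQP hAc m2 m3
end

section
/- Let Π be an instance of NotAllEqual 3-SAT with n clauses and G(Π)=(V,E), b, r the associated construction. In every (b,r)-partition of E, with any b-orientation of the blue tree and r-orientation of the red tree, for every variable x, every arc corresponding to a matching edge u^C_x v^C_x or u^{C'}_x v^{C'}_x (for C a clause containing x) is oriented toward its endpoint on the cycle Δ_x, i.e., it enters Δ_x. -/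
open Finset
open scoped Classical

namespace Aux

/-- membership in `W = {s} ∪ u`-vertices -/
def inW {n : ℕ} : GVert n → Bool
  | .v _ _ _ => false
  | _ => true

@[simp] lemma inW_s {n : ℕ} : inW (GVert.s : GVert n) = true := rfl
@[simp] lemma inW_u {n : ℕ} (i : Fin n) (o : Bool) (j : Fin 3) :
    inW (GVert.u i o j) = true := rfl
@[simp] lemma inW_v {n : ℕ} (i : Fin n) (o : Bool) (j : Fin 3) :
    inW (GVert.v i o j) = false := rfl

def gEquiv (n : ℕ) :
    GVert n ≃ (Unit ⊕ (Fin n × Bool × Fin 3) ⊕ (Fin n × Bool × Fin 3)) where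
  toFun x := match x with
    | .s => Sum.inl ()
    | .u i o j => Sum.inr (Sum.inl (i, o, j))
    | .v i o j => Sum.inr (Sum.inr (i, o, j))
  invFun x := match x with
    | Sum.inl _ => .s
    | Sum.inr (Sum.inl (i, o, j)) => .u i o j
    | Sum.inr (Sum.inr (i, o, j)) => .v i o j
  left_inv x := by cases x <;> rfl
  right_inv x := by rcases x with _ | (⟨i, o, j⟩ | ⟨i, o, j⟩) <;> rfl

instance instFintypeGVert {n : ℕ} : Fintype (GVert n) :=
  Fintype.ofEquiv _ (gEquiv n).symm

lemma card_tail {n : ℕ} (d : GVert n → GVert n → Prop) (m : GVert n → ℕ)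
    (hms : m .s = 3 * n) (hmu : ∀ i o j, m (.u i o j) = 1)
    (hd : ∀ w, Nat.card {z // d w z} = m w) :
    (univ.filter fun a : GVert n × GVert n => inW a.1 = true ∧ d a.1 a.2).card = 9 * n := by
  classical
  rw [Finset.card_eq_sum_card_fiberwise
      (f := fun a : GVert n × GVert n => a.1)
      (t := univ.filter fun w : GVert n => inW w = true)
      (fun a ha => by
        simp only [mem_filter, mem_univ, true_and] at ha ⊢
        simpa using (Finset.mem_filter.mp (show a ∈ univ.filter fun a : GVert n × GVert n =>
          inW a.1 = true ∧ d a.1 a.2 from ha)).2.1)]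
  have hfib : ∀ w ∈ univ.filter (fun w : GVert n => inW w = true),
      ((univ.filter fun a : GVert n × GVert n => inW a.1 = true ∧ d a.1 a.2).filter
        fun a => a.1 = w).card = m w := by
    intro w hw
    simp only [mem_filter, mem_univ, true_and] at hw
    have himg : ((univ.filter fun a : GVert n × GVert n => inW a.1 = true ∧ d a.1 a.2).filter
        fun a => a.1 = w) = (univ.filter fun z => d w z).image (fun z => (w, z)) := by
      ext a
      simp only [mem_filter, mem_univ, true_and, mem_image]
      constructor
      · rintro ⟨⟨h1, h2⟩, h3⟩
        exact ⟨a.2, by rw [← h3]; exact h2, by rw [← h3]⟩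
      · rintro ⟨z, hz, rfl⟩
        exact ⟨⟨hw, hz⟩, rfl⟩
    rw [himg, Finset.card_image_of_injective _ (fun x y h => congrArg Prod.snd h)]
    rw [← hd w, Nat.card_eq_fintype_card, Fintype.card_subtype]
  rw [Finset.sum_congr rfl hfib, Finset.sum_filter]
  rw [Fintype.sum_equiv (gEquiv n).symm
      (fun x => if inW ((gEquiv n).symm x) = true then m ((gEquiv n).symm x) else 0)
      (fun w => if inW w = true then m w else 0) (fun x => rfl) |>.symm]
  rw [Fintype.sum_sum_type, Fintype.sum_sum_type]
  have e1 : ∀ x : Unit,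
      (if inW ((gEquiv n).symm (Sum.inl x)) = true then m ((gEquiv n).symm (Sum.inl x)) else 0)
        = 3 * n := fun _ => by simp [gEquiv, hms]
  have e2 : ∀ x : Fin n × Bool × Fin 3,
      (if inW ((gEquiv n).symm (Sum.inr (Sum.inl x))) = true
        then m ((gEquiv n).symm (Sum.inr (Sum.inl x))) else 0) = 1 := by
    rintro ⟨i, o, j⟩; simp [gEquiv, hmu]
  have e3 : ∀ x : Fin n × Bool × Fin 3,
      (if inW ((gEquiv n).symm (Sum.inr (Sum.inr x))) = true
        then m ((gEquiv n).symm (Sum.inr (Sum.inr x))) else 0) = 0 := by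
    rintro ⟨i, o, j⟩; simp [gEquiv]
  rw [Finset.sum_congr rfl fun x _ => e1 x, Finset.sum_congr rfl fun x _ => e2 x,
    Finset.sum_congr rfl fun x _ => e3 x]
  simp only [Finset.sum_const, smul_eq_mul, mul_one, mul_zero, Finset.card_univ,
    Fintype.card_prod, Fintype.card_fin, Fintype.card_bool, Fintype.card_unit]
  ring

lemma third_eq : ∀ j j' k k' : Fin 3, j ≠ j' → k ≠ k' → -(j + j') = -(k + k') →
    (j = k ∧ j' = k') ∨ (j = k' ∧ j' = k) := by decide

lemma adj_out {α : Type*} [DecidableEq α] {n : ℕ} {cl : Fin n → Fin 3 → α}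
    {a b : GVert n} (h : (gadgetGraph cl).Adj a b)
    (ha : inW a = true) (hb : inW b = false) :
    ∃ i o j, a = GVert.u i o j ∧ b = GVert.v i o j := by
  rw [gadgetGraph, SimpleGraph.fromRel_adj] at h
  obtain ⟨-, h | h⟩ := h <;> cases h <;>
    first
      | exact ⟨_, _, _, rfl, rfl⟩
      | simp_all

lemma adj_in {α : Type*} [DecidableEq α] {n : ℕ} {cl : Fin n → Fin 3 → α}
    {a b : GVert n} (h : (gadgetGraph cl).Adj a b)
    (ha : inW a = true) (hb : inW b = true) :
    (∃ i o j, a = GVert.s ∧ b = GVert.u i o j) ∨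
    (∃ i o j, a = GVert.u i o j ∧ b = GVert.s) ∨
    (∃ i o j j', j ≠ j' ∧ a = GVert.u i o j ∧ b = GVert.u i o j') := by
  rw [gadgetGraph, SimpleGraph.fromRel_adj] at h
  obtain ⟨-, h | h⟩ := h
  · cases h with
    | star i o j => exact Or.inl ⟨_, _, _, rfl, rfl⟩
    | tri i o hne => exact Or.inr (Or.inr ⟨_, _, _, _, ‹_ ≠ _›, rfl, rfl⟩)
    | mat i o j => simp_all
    | cycA p => simp_all
    | cycB p => simp_all
  · cases h with
    | star i o j => exact Or.inr (Or.inl ⟨_, _, _, rfl, rfl⟩)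
    | tri i o hne => exact Or.inr (Or.inr ⟨_, _, _, _, (‹_ ≠ _› : _ ≠ _).symm, rfl, rfl⟩)
    | mat i o j => simp_all
    | cycA p => simp_all
    | cycB p => simp_all

end Aux


/-- In every `(b,r)`-partition of `G(Π)`, with any
`b`-orientation of the blue tree and `r`-orientation of the red tree, for
every variable `x` every matching arc `u^C_x v^C_x` or `u^{C'}_x v^{C'}_x`
(over clauses `C` containing `x`) is oriented towards its endpoint on the
cycle `Δ_x`, i.e. it enters `Δ_x`. -/
theorem stmt14 {α : Type*} [DecidableEq α] {n : ℕ} (cl : Fin n → Fin 3 → α)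
    (hcl : ∀ i, Function.Injective (cl i)) (B R : SimpleGraph (GVert n))
    (hpart : IsTreePartition (gadgetGraph cl) B R)
    (db dr : GVert n → GVert n → Prop)
    (hb : IsMOrientation B.edgeSet (bvec n) db)
    (hr : IsMOrientation R.edgeSet (rvec n) dr) :
    ∀ x : α, ∀ p ∈ occs cl x, ∀ o : Bool,
      (mEdge p o ∈ B.edgeSet → db (GVert.u p.1 o p.2) (GVert.v p.1 o p.2)) ∧
      (mEdge p o ∈ R.edgeSet → dr (GVert.u p.1 o p.2) (GVert.v p.1 o p.2)) := by
  classical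
  intro x p hp o
  have i₀ : Fin n := p.1
  obtain ⟨hBG, hRG, -, -, hdisj, -⟩ := hpart
  obtain ⟨⟨hb1, hb2⟩, hb3⟩ := hb
  obtain ⟨⟨hr1, hr2⟩, hr3⟩ := hr
  have noBR : ∀ y z : GVert n, db y z → dr y z → False := fun y z h1 h2 =>
    Set.disjoint_left.mp hdisj (hb1 y z h1) (hr1 y z h2)
  have norev : ∀ y z : GVert n, (db y z ∨ dr y z) → (db z y ∨ dr z y) → False := by
    intro y z h1 h2
    have sw : s(z, y) = s(y, z) := Sym2.eq_swap
    rcases h1 with h1 | h1 <;> rcases h2 with h2 | h2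
    · exact (hb2 y z (hb1 y z h1)).2 ⟨h1, h2⟩
    · exact Set.disjoint_left.mp hdisj (hb1 y z h1) (sw ▸ hr1 z y h2)
    · exact Set.disjoint_left.mp hdisj (sw ▸ hb1 z y h2) (hr1 y z h1)
    · exact (hr2 y z (hr1 y z h1)).2 ⟨h1, h2⟩
  have adjBR : ∀ y z : GVert n, (db y z ∨ dr y z) → (gadgetGraph cl).Adj y z := by
    rintro y z (h | h)
    · exact hBG ((SimpleGraph.mem_edgeSet _).mp (hb1 y z h))
    · exact hRG ((SimpleGraph.mem_edgeSet _).mp (hr1 y z h))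
  set MB : Finset ((Fin n × Fin 3) × Bool) :=
    univ.filter (fun q => db (GVert.u q.1.1 q.2 q.1.2) (GVert.v q.1.1 q.2 q.1.2)) with hMB
  set MR : Finset ((Fin n × Fin 3) × Bool) :=
    univ.filter (fun q => dr (GVert.u q.1.1 q.2 q.1.2) (GVert.v q.1.1 q.2 q.1.2)) with hMR
  set Tb : Finset (GVert n × GVert n) :=
    univ.filter (fun a => Aux.inW a.1 = true ∧ db a.1 a.2) with hTbdef
  set Tr : Finset (GVert n × GVert n) :=
    univ.filter (fun a => Aux.inW a.1 = true ∧ dr a.1 a.2) with hTrdef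
  have hTb : Tb.card = 9 * n := Aux.card_tail db (bvec n) rfl (fun _ _ _ => rfl) hb3
  have hTr : Tr.card = 9 * n := Aux.card_tail dr (rvec n) rfl (fun _ _ _ => rfl) hr3
  have hsplitb := Finset.card_filter_add_card_filter_not
    (s := Tb) (p := fun a => Aux.inW a.2 = true)
  have hsplitr := Finset.card_filter_add_card_filter_not
    (s := Tr) (p := fun a => Aux.inW a.2 = true)
  -- the out-arcs inject into the matching arcs
  have houtb : (Tb.filter fun a => ¬ Aux.inW a.2 = true).card ≤ MB.card := by
    apply Finset.card_le_card_of_injOn (fun a => match a.2 with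
      | GVert.v i o j => ((i, j), o)
      | _ => ((i₀, 0), false))
    · rintro ⟨a1, a2⟩ ha
      simp only [hTbdef, mem_filter, mem_univ, true_and, Bool.not_eq_true] at ha
      obtain ⟨⟨h1, h2⟩, h3⟩ := (by simpa using Finset.mem_filter.mp ha :
        (Aux.inW a1 = true ∧ db a1 a2) ∧ Aux.inW a2 = false)
      obtain ⟨i, o, j, e1, e2⟩ := Aux.adj_out (adjBR _ _ (Or.inl h2)) h1 h3
      subst e1; subst e2
      simp only [hMB, mem_coe, mem_filter, mem_univ, true_and]
      exact h2
    · rintro ⟨a1, a2⟩ ha ⟨a1', a2'⟩ ha' heq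
      simp only [hTbdef, mem_coe, mem_filter, mem_univ, true_and, Bool.not_eq_true]
        at ha ha'
      obtain ⟨⟨h1, h2⟩, h3⟩ := ha
      obtain ⟨⟨h1', h2'⟩, h3'⟩ := ha'
      obtain ⟨i, o, j, e1, e2⟩ := Aux.adj_out (adjBR _ _ (Or.inl h2)) h1 h3
      obtain ⟨i', o', j', e1', e2'⟩ := Aux.adj_out (adjBR _ _ (Or.inl h2')) h1' h3'
      subst e1; subst e2; subst e1'; subst e2'
      simp only [Prod.mk.injEq] at heq
      obtain ⟨⟨rfl, rfl⟩, rfl⟩ := heq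
      rfl
  have houtr : (Tr.filter fun a => ¬ Aux.inW a.2 = true).card ≤ MR.card := by
    apply Finset.card_le_card_of_injOn (fun a => match a.2 with
      | GVert.v i o j => ((i, j), o)
      | _ => ((i₀, 0), false))
    · rintro ⟨a1, a2⟩ ha
      simp only [hTrdef, mem_filter, mem_univ, true_and, Bool.not_eq_true] at ha
      obtain ⟨⟨h1, h2⟩, h3⟩ := (by simpa using Finset.mem_filter.mp ha :
        (Aux.inW a1 = true ∧ dr a1 a2) ∧ Aux.inW a2 = false)
      obtain ⟨i, o, j, e1, e2⟩ := Aux.adj_out (adjBR _ _ (Or.inr h2)) h1 h3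
      subst e1; subst e2
      simp only [hMR, mem_coe, mem_filter, mem_univ, true_and]
      exact h2
    · rintro ⟨a1, a2⟩ ha ⟨a1', a2'⟩ ha' heq
      simp only [hTrdef, mem_coe, mem_filter, mem_univ, true_and, Bool.not_eq_true]
        at ha ha'
      obtain ⟨⟨h1, h2⟩, h3⟩ := ha
      obtain ⟨⟨h1', h2'⟩, h3'⟩ := ha'
      obtain ⟨i, o, j, e1, e2⟩ := Aux.adj_out (adjBR _ _ (Or.inr h2)) h1 h3
      obtain ⟨i', o', j', e1', e2'⟩ := Aux.adj_out (adjBR _ _ (Or.inr h2')) h1' h3'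
      subst e1; subst e2; subst e1'; subst e2'
      simp only [Prod.mk.injEq] at heq
      obtain ⟨⟨rfl, rfl⟩, rfl⟩ := heq
      rfl
  -- the within-W arcs of both colors inject into the 12n within-W edges
  have hdisjin : Disjoint (Tb.filter fun a => Aux.inW a.2 = true)
      (Tr.filter fun a => Aux.inW a.2 = true) := by
    rw [Finset.disjoint_left]
    intro a h1 h2
    simp only [hTbdef, hTrdef, mem_filter, mem_univ, true_and] at h1 h2
    exact noBR _ _ h1.1.2 h2.1.2
  have hin : (Tb.filter fun a => Aux.inW a.2 = true).card
      + (Tr.filter fun a => Aux.inW a.2 = true).card ≤ 12 * n := by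
    rw [← Finset.card_union_of_disjoint hdisjin]
    have hcardI : Fintype.card ((Fin n × Bool × Fin 3) ⊕ (Fin n × Bool × Fin 3)) = 12 * n := by
      simp only [Fintype.card_sum, Fintype.card_prod, Fintype.card_fin, Fintype.card_bool]
      ring
    rw [← hcardI, ← Finset.card_univ]
    apply Finset.card_le_card_of_injOn (fun a : GVert n × GVert n => match a with
      | (GVert.s, GVert.u i o j) => Sum.inl (i, o, j)
      | (GVert.u i o j, GVert.s) => Sum.inl (i, o, j)
      | (GVert.u i o j, GVert.u i' o' j') => Sum.inr (i, o, -(j + j'))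
      | _ => Sum.inl (i₀, false, 0))
    · intro a _; exact mem_univ _
    · have hfacts : ∀ a ∈ (Tb.filter fun a => Aux.inW a.2 = true)
          ∪ (Tr.filter fun a => Aux.inW a.2 = true),
          Aux.inW a.1 = true ∧ Aux.inW a.2 = true ∧ (db a.1 a.2 ∨ dr a.1 a.2) := by
        intro a ha
        rcases Finset.mem_union.mp ha with h | h <;>
          simp only [hTbdef, hTrdef, mem_filter, mem_univ, true_and] at h <;>
          exact ⟨h.1.1, h.2, by tauto⟩
      rintro ⟨a1, a2⟩ ha ⟨a1', a2'⟩ ha' heq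
      obtain ⟨h1, h2, h3⟩ := hfacts _ (Finset.mem_coe.mp ha)
      obtain ⟨h1', h2', h3'⟩ := hfacts _ (Finset.mem_coe.mp ha')
      rcases Aux.adj_in (adjBR _ _ h3) h1 h2 with
        ⟨i, o, j, e1, e2⟩ | ⟨i, o, j, e1, e2⟩ | ⟨i, o, j, j2, hne, e1, e2⟩ <;>
        rcases Aux.adj_in (adjBR _ _ h3') h1' h2' with
          ⟨i', o', j', e1', e2'⟩ | ⟨i', o', j', e1', e2'⟩ |
          ⟨i', o', j', j2', hne', e1', e2'⟩ <;>
        subst e1 <;> subst e2 <;> subst e1' <;> subst e2' <;>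
        simp only [Sum.inl.injEq, Sum.inr.injEq, Prod.mk.injEq, reduceCtorEq] at heq
      · obtain ⟨rfl, rfl, rfl⟩ := heq; rfl
      · obtain ⟨rfl, rfl, rfl⟩ := heq
        exact absurd h3' (fun h => norev _ _ h3 h)
      · obtain ⟨rfl, rfl, rfl⟩ := heq
        exact absurd h3' (fun h => norev _ _ h3 h)
      · obtain ⟨rfl, rfl, rfl⟩ := heq; rfl
      · obtain ⟨rfl, rfl, hthird⟩ := heq
        rcases Aux.third_eq _ _ _ _ hne hne' hthird with ⟨rfl, rfl⟩ | ⟨rfl, rfl⟩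
        · rfl
        · exact absurd h3' (fun h => norev _ _ h3 h)
  -- MB and MR are disjoint subsets of a 6n-element type
  have hdisjM : Disjoint MB MR := by
    rw [Finset.disjoint_left]
    intro q hq1 hq2
    simp only [hMB, hMR, mem_filter, mem_univ, true_and] at hq1 hq2
    exact noBR _ _ hq1 hq2
  have hcardQ : Fintype.card ((Fin n × Fin 3) × Bool) = 6 * n := by
    simp only [Fintype.card_prod, Fintype.card_fin, Fintype.card_bool]
    ring
  have hle6 : (MB ∪ MR).card ≤ 6 * n := by
    rw [← hcardQ, ← Finset.card_univ]
    exact Finset.card_le_card (Finset.subset_univ _)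
  have hunionM : (MB ∪ MR).card = MB.card + MR.card :=
    Finset.card_union_of_disjoint hdisjM
  have hcover : MB ∪ MR = univ := by
    apply Finset.eq_univ_of_card
    rw [hcardQ]
    omega
  have hqmem : (p, o) ∈ MB ∪ MR := hcover ▸ mem_univ _
  constructor
  · intro hmem
    rcases Finset.mem_union.mp hqmem with h | h
    · simpa only [hMB, mem_filter, mem_univ, true_and] using h
    · exfalso
      have h' : dr (GVert.u p.1 o p.2) (GVert.v p.1 o p.2) := by
        simpa only [hMR, mem_filter, mem_univ, true_and] using h
      exact Set.disjoint_left.mp hdisj hmem (hr1 _ _ h')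
  · intro hmem
    rcases Finset.mem_union.mp hqmem with h | h
    · exfalso
      have h' : db (GVert.u p.1 o p.2) (GVert.v p.1 o p.2) := by
        simpa only [hMB, mem_filter, mem_univ, true_and] using h
      exact Set.disjoint_left.mp hdisj (hb1 _ _ h') hmem
    · simpa only [hMR, mem_filter, mem_univ, true_and] using h
end
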